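/- Let F : ℝ² → ℝ be continuously differentiable, let μ > 0 and η > 0, and assume: (i) 0 < μ·F(w) ≤ ∇F(w)·w for all w ≠ 0, and (ii) the limit inferior of F(w)/|w|^μ as w → 0 (w ≠ 0) is at least η. Then F(w) ≥ η·|w|^μ for all w ∈ ℝ². -/

import Mathlib

open Filter Set Real Topology


/-- If `F : ℝ² → ℝ` is `C¹`, `μ > 0`, `η > 0`, with
`0 < μ F(w) ≤ ∇F(w)·w` for all `w ≠ 0` and
`liminf_{w → 0, w ≠ 0} F(w) / ‖w‖ ^ μ ≥ η`, then `F(w) ≥ η ‖w‖ ^ μ` for all `w`. -/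
theorem stmt5 (F : EuclideanSpace ℝ (Fin 2) → ℝ) (hF : ContDiff ℝ 1 F)
    (μ η : ℝ) (hμ : 0 < μ) (hη : 0 < η)
    (hAR : ∀ w : EuclideanSpace ℝ (Fin 2), w ≠ 0 →
      0 < μ * F w ∧ μ * F w ≤ fderiv ℝ F w w)
    (hliminf : η ≤ Filter.liminf (fun w : EuclideanSpace ℝ (Fin 2) => F w / ‖w‖ ^ μ)
      (nhdsWithin 0 {w : EuclideanSpace ℝ (Fin 2) | w ≠ 0})) :
    ∀ w : EuclideanSpace ℝ (Fin 2), η * ‖w‖ ^ μ ≤ F w := by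
  have hFpos : ∀ v : EuclideanSpace ℝ (Fin 2), v ≠ 0 → 0 < F v := by
    intro v hv
    have := (hAR v hv).1
    nlinarith
  intro w
  rcases eq_or_ne w 0 with rfl | hw
  · rw [norm_zero, Real.zero_rpow hμ.ne', mul_zero]
    -- F 0 ≥ 0 by continuity along a ray
    set e : EuclideanSpace ℝ (Fin 2) := EuclideanSpace.single 0 1 with he_def
    have he : e ≠ 0 := by
      intro h
      have := congrArg (fun v : EuclideanSpace ℝ (Fin 2) => v 0) h
      simp [he_def] at this
    have hsm : Tendsto (fun t : ℝ => t • e) (𝓝[>] 0) (𝓝 (0 : EuclideanSpace ℝ (Fin 2))) := by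
      have h1 : Tendsto (fun t : ℝ => t • e) (𝓝 0) (𝓝 ((0:ℝ) • e)) :=
        ((continuous_id.smul continuous_const).tendsto 0)
      simpa using h1.mono_left nhdsWithin_le_nhds
    have htend : Tendsto (fun t : ℝ => F (t • e)) (𝓝[>] 0) (𝓝 (F 0)) :=
      (hF.continuous.tendsto 0).comp hsm
    refine ge_of_tendsto htend ?_
    filter_upwards [self_mem_nhdsWithin] with t ht
    exact (hFpos _ (smul_ne_zero (ne_of_gt ht) he)).le
  · have hwpos : (0:ℝ) < ‖w‖ := norm_pos_iff.mpr hw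
    set h : ℝ → ℝ := fun t => F (t • w) with hh
    have hderiv : ∀ t : ℝ, HasDerivAt h (fderiv ℝ F (t • w) w) t := by
      intro t
      have h1 : HasDerivAt (fun s : ℝ => s • w) ((1:ℝ) • w) t := (hasDerivAt_id t).smul_const w
      have h2 := (hF.differentiable one_ne_zero (t • w)).hasFDerivAt
      have h3 := h2.comp_hasDerivAt t h1; simp only [one_smul] at h3; exact h3
    set g : ℝ → ℝ := fun t => h t * t ^ (-μ) with hg
    have hgderiv : ∀ t ∈ Ioi (0:ℝ), HasDerivAt g
        (fderiv ℝ F (t • w) w * t ^ (-μ) + h t * (-μ * t ^ (-μ - 1))) t := by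
      intro t ht
      exact (hderiv t).mul (Real.hasDerivAt_rpow_const (Or.inl (ne_of_gt ht)))
    have hg_nonneg : ∀ t ∈ Ioi (0:ℝ), 0 ≤ deriv g t := by
      intro t ht
      rw [(hgderiv t ht).deriv]
      have hAR' := hAR (t • w) (smul_ne_zero (ne_of_gt ht) hw)
      have hlin : fderiv ℝ F (t • w) (t • w) = t * fderiv ℝ F (t • w) w := by
        rw [map_smul]; rfl
      have key : μ * h t ≤ t * fderiv ℝ F (t • w) w := by
        have h2 := hAR'.2; rw [hlin] at h2; exact h2
      have hA : 0 < t ^ (-μ - 1) := Real.rpow_pos_of_pos ht _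
      have hmu : t ^ (-μ) = t * t ^ (-μ - 1) := by
        have h2 := Real.rpow_add ht 1 (-μ - 1)
        rw [Real.rpow_one, show 1 + (-μ - 1) = -μ by ring] at h2
        exact h2
      rw [hmu]
      nlinarith
    have hmono : MonotoneOn g (Ioi (0:ℝ)) := by
      apply monotoneOn_of_deriv_nonneg (convex_Ioi 0)
      · exact fun t ht => ((hgderiv t ht).differentiableAt).continuousAt.continuousWithinAt
      · intro t ht
        rw [interior_Ioi] at ht
        exact ((hgderiv t ht).differentiableAt).differentiableWithinAt
      · intro t ht
        rw [interior_Ioi] at ht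
        exact hg_nonneg t ht
    have hg1 : g 1 = F w := by
      simp [hg, hh, Real.one_rpow]
    have hpow : 0 < ‖w‖ ^ μ := Real.rpow_pos_of_pos hwpos μ
    rw [← le_div_iff₀ hpow]
    refine le_of_forall_lt fun c hc => ?_
    have hc' : c < Filter.liminf (fun v : EuclideanSpace ℝ (Fin 2) => F v / ‖v‖ ^ μ)
        (nhdsWithin 0 {v : EuclideanSpace ℝ (Fin 2) | v ≠ 0}) := lt_of_lt_of_le hc hliminf
    have hbdd : IsBoundedUnder (· ≥ ·) (nhdsWithin (0 : EuclideanSpace ℝ (Fin 2))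
        {v : EuclideanSpace ℝ (Fin 2) | v ≠ 0}) (fun v => F v / ‖v‖ ^ μ) := by
      refine isBoundedUnder_of_eventually_ge (a := 0) ?_
      filter_upwards [self_mem_nhdsWithin] with v hv
      have hv' : v ≠ 0 := hv
      have : 0 < ‖v‖ := norm_pos_iff.mpr hv'
      exact le_of_lt (div_pos (hFpos v hv') (Real.rpow_pos_of_pos this μ))
    have hev := eventually_lt_of_lt_liminf hc' hbdd
    have htend : Tendsto (fun t : ℝ => t • w) (𝓝[>] 0)
        (nhdsWithin (0 : EuclideanSpace ℝ (Fin 2)) {v | v ≠ 0}) := by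
      refine tendsto_nhdsWithin_of_tendsto_nhds_of_eventually_within _ ?_ ?_
      · have h1 : Tendsto (fun t : ℝ => t • w) (𝓝 0) (𝓝 ((0:ℝ) • w)) :=
          ((continuous_id.smul continuous_const).tendsto 0)
        simpa using h1.mono_left nhdsWithin_le_nhds
      · filter_upwards [self_mem_nhdsWithin] with t ht
        exact smul_ne_zero (ne_of_gt ht) hw
    have hev2 : ∀ᶠ t : ℝ in 𝓝[>] 0, c < F (t • w) / ‖t • w‖ ^ μ := htend.eventually hev
    have hIoo : ∀ᶠ t : ℝ in 𝓝[>] 0, t ∈ Ioo (0:ℝ) 1 :=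
      eventually_mem_set.mpr (Ioo_mem_nhdsGT_of_mem ⟨le_refl 0, zero_lt_one⟩)
    obtain ⟨t, htc, ht0, ht1⟩ := (hev2.and hIoo).exists
    have htpos : (0:ℝ) < t := ht0
    -- compute ‖t • w‖ ^ μ = t ^ μ * ‖w‖ ^ μ
    have hnorm : ‖t • w‖ ^ μ = t ^ μ * ‖w‖ ^ μ := by
      rw [norm_smul, Real.norm_eq_abs, abs_of_pos htpos,
        Real.mul_rpow htpos.le (norm_nonneg w)]
    have hgt : F (t • w) / ‖t • w‖ ^ μ = g t / ‖w‖ ^ μ := by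
      rw [hnorm]
      simp only [hg, hh]
      rw [Real.rpow_neg htpos.le]
      field_simp
    have hle : g t ≤ F w := by
      have := hmono (show t ∈ Ioi (0:ℝ) from htpos) (show (1:ℝ) ∈ Ioi (0:ℝ) from Set.mem_Ioi.mpr zero_lt_one) ht1.le
      rwa [hg1] at this
    calc c < F (t • w) / ‖t • w‖ ^ μ := htc
      _ = g t / ‖w‖ ^ μ := hgt
      _ ≤ F w / ‖w‖ ^ μ := by gcongr
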